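/- Let P be a convex n-gon oriented counterclockwise and let {P(t) : 0 ≤ t ≤ c} be a decreasing path of n-gons with P(0) = P such that P(t) is non-degenerately contained in P for every t ∈ [0,c]. If p_i(c) ∈ ∂P for some index i, then either p_i(t) ∈ [p_{i-1}, p_i] \ {p_{i-1}} for all t ∈ [0,c], or p_i(t) ∈ [p_i, p_{i+1}] \ {p_{i+1}} for all t ∈ [0,c]. -/

import Mathlib

noncomputable section

abbrev Pt : Type := EuclideanSpace ℝ (Fin 2)

/-- Convex hull of the vertices of a polygon. -/
def hull {n : ℕ} (P : Fin n → Pt) : Set Pt := convexHull ℝ (Set.range P)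

/-- `P'` is degenerately contained in the `n`-gon `P`: there is an interpolating
`m`-gon with `m < n`. -/
def DegenIn {k n : ℕ} (P' : Fin k → Pt) (P : Fin n → Pt) : Prop :=
  ∃ m : ℕ, m < n ∧ ∃ Q : Fin m → Pt, hull P' ⊆ hull Q ∧ hull Q ⊆ hull P

/-- `P'` is obtained from `P` by a single pull-in move. -/
def PullIn {n : ℕ} (P P' : Fin n → Pt) : Prop :=
  ∃ i j : Fin n, i ≠ j ∧ P' i ∈ segment ℝ (P i) (P j) ∧ ∀ k, k ≠ i → P' k = P k

/-- `P'` is obtained from `P` by a single push-out move (the inverse of a pull-in). -/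
def PushOut {n : ℕ} (P P' : Fin n → Pt) : Prop :=
  ∃ i j : Fin n, i ≠ j ∧ P i ∈ segment ℝ (P j) (P' i) ∧ ∀ k, k ≠ i → P' k = P k

/-- A chain of exactly `m` moves (given by the relation `R`) from `P` to `P'`. -/
def MoveChain {n : ℕ} (R : (Fin n → Pt) → (Fin n → Pt) → Prop) (m : ℕ)
    (P P' : Fin n → Pt) : Prop :=
  ∃ Q : Fin (m + 1) → Fin n → Pt, Q 0 = P ∧ Q (Fin.last m) = P' ∧
    ∀ s : Fin m, R (Q s.castSucc) (Q s.succ)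

/-- `P'` is attainable from `P` by a decreasing path of polygons. -/
def Attainable {n : ℕ} (P P' : Fin n → Pt) : Prop :=
  ∃ c : ℝ, 0 ≤ c ∧ ∃ F : ℝ → Fin n → Pt,
    ContinuousOn F (Set.Icc 0 c) ∧ F 0 = P ∧ F c = P' ∧
    ∀ t t' : ℝ, t ∈ Set.Icc 0 c → t' ∈ Set.Icc 0 c → t ≤ t' → hull (F t') ⊆ hull (F t)

/-- Determinant of the 3×3 matrix with rows (a,1), (b,1), (c,1). -/
def det3 (a b c : Pt) : ℝ := (b 0 - a 0) * (c 1 - a 1) - (b 1 - a 1) * (c 0 - a 0)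

/-- `P` is a convex polygon oriented counterclockwise. -/
def CCW {n : ℕ} [NeZero n] (P : Fin n → Pt) : Prop :=
  ∀ i j : Fin n, j ≠ i → j ≠ i + 1 → 0 < det3 (P i) (P (i + 1)) (P j)

/-- The boundary of a polygon: the union of its edges. -/
def bdry {n : ℕ} [NeZero n] (P : Fin n → Pt) : Set Pt :=
  ⋃ i : Fin n, segment ℝ (P i) (P (i + 1))

/-- The threshold set of `P`: attainable polygons with a vertex on `∂P`. -/
def Threshold {n : ℕ} [NeZero n] (P : Fin n → Pt) : Set (Fin n → Pt) :=
  {P' | Attainable P P' ∧ ∃ i, P' i ∈ bdry P}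

/-- A neighbor pull-in move: a pull-in of a vertex toward one of its two neighbors. -/
def NbrPullIn {n : ℕ} [NeZero n] (P P' : Fin n → Pt) : Prop :=
  ∃ i j : Fin n, (j = i - 1 ∨ j = i + 1) ∧ i ≠ j ∧ P' i ∈ segment ℝ (P i) (P j) ∧
    ∀ k, k ≠ i → P' k = P k

/-- The vestibule of `P`: polygons one neighbor pull-in move away from the threshold. -/
def Vestibule {n : ℕ} [NeZero n] (P : Fin n → Pt) : Set (Fin n → Pt) :=
  {P' | ∃ Q ∈ Threshold P, NbrPullIn Q P'}

/-- A polygon is set-convex if no vertex lies in the convex hull of the others. -/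
def SetConvex {n : ℕ} (P : Fin n → Pt) : Prop :=
  ∀ i : Fin n, P i ∉ convexHull ℝ (P '' {j | j ≠ i})

/-- A maximal degenerate `(n-1)`-gon inscribed in the convex `n`-gon `P`. -/
def MaxDegen {n : ℕ} [NeZero n] (P : Fin n → Pt) (Q : Fin (n - 1) → Pt) : Prop :=
  (∀ k, Q k ∈ bdry P) ∧
  ∀ k : Fin (n - 1),
    (∃ i : Fin n, Q k = P i ∧ ∀ k' : Fin (n - 1), k' ≠ k → Q k' ≠ P i) ∨
    (∃ i : Fin n, Q k ∈ segment ℝ (P i) (P (i + 1)) ∧ (∀ j : Fin n, Q k ≠ P j) ∧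
      ∀ k' : Fin (n - 1), k' ≠ k → Q k' ∉ segment ℝ (P i) (P (i + 1)))

/-- Area of a polygon: the Lebesgue measure of its convex hull. -/
def area {n : ℕ} (P : Fin n → Pt) : ℝ := (MeasureTheory.volume (hull P)).toReal

/-- `P'` is in the midpoint pockets of `P`. -/
def MidpointPockets {n : ℕ} [NeZero n] (P P' : Fin n → Pt) : Prop :=
  ∀ i : Fin n,
    P' i ∈ convexHull ℝ
      ({midpoint ℝ (P (i - 1)) (P i), P i, midpoint ℝ (P i) (P (i + 1))} : Set Pt) ∧
    P i ∉ segment ℝ (midpoint ℝ (P (i - 1)) (P i)) (midpoint ℝ (P i) (P (i + 1)))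

/-- A row stochastic matrix. -/
def RowStochastic {n : ℕ} (D : Matrix (Fin n) (Fin n) ℝ) : Prop :=
  (∀ i j, 0 ≤ D i j) ∧ ∀ i, ∑ j, D i j = 1

/-- A continuous-time non-homogeneous Markov process of `n` states. -/
def IsMarkovProcess (n : ℕ) (M : ℝ → ℝ → Matrix (Fin n) (Fin n) ℝ) : Prop :=
  ContinuousOn (fun p : ℝ × ℝ => M p.1 p.2) {p : ℝ × ℝ | 0 ≤ p.1 ∧ p.1 ≤ p.2} ∧
  (∀ s t : ℝ, 0 ≤ s → s ≤ t → IsUnit (M s t).det ∧ RowStochastic (M s t)) ∧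
  (∀ r s t : ℝ, 0 ≤ r → r ≤ s → s ≤ t → M r t = M r s * M s t) ∧
  (∀ t : ℝ, 0 ≤ t → M t t = 1)

/-- An embeddable stochastic matrix. -/
def Embeddable {n : ℕ} (D : Matrix (Fin n) (Fin n) ℝ) : Prop :=
  ∃ M : ℝ → ℝ → Matrix (Fin n) (Fin n) ℝ, IsMarkovProcess n M ∧
    ∃ s t : ℝ, 0 ≤ s ∧ s ≤ t ∧ D = M s t

/-- The elementary stochastic matrix `K^{ij}(c)`. -/
def elemStoch {n : ℕ} (i j : Fin n) (c : ℝ) : Matrix (Fin n) (Fin n) ℝ :=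
  1 + c • (Matrix.single i j 1 - Matrix.single i i 1)

namespace S16

lemma sum_apply_pt {r : ℕ} (w : Fin r → ℝ) (p : Fin r → Pt) (j : Fin 2) :
    (∑ k, w k • p k) j = ∑ k, w k * p k j := by
  induction' (Finset.univ : Finset (Fin r)) using Finset.induction with a s ha ih
  · simp
  · rw [Finset.sum_insert ha, Finset.sum_insert ha, ← ih]; rfl

lemma det3_comb {r : ℕ} (a b : Pt) (w : Fin r → ℝ) (p : Fin r → Pt) (hw : ∑ k, w k = 1) :
    det3 a b (∑ k, w k • p k) = ∑ k, w k * det3 a b (p k) := by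
  have h : ∀ k : Fin r, w k * det3 a b (p k)
      = (b 0 - a 0) * (w k * p k 1) - (b 1 - a 1) * (w k * p k 0)
        - w k * ((b 0 - a 0) * a 1 - (b 1 - a 1) * a 0) := by
    intro k; simp only [det3]; ring
  rw [Finset.sum_congr rfl (fun k _ => h k)]
  rw [Finset.sum_sub_distrib, Finset.sum_sub_distrib, ← Finset.mul_sum, ← Finset.mul_sum,
    ← Finset.sum_mul, hw]
  simp only [det3, sum_apply_pt]
  ring

lemma repr_hull {r : ℕ} {p : Fin r → Pt} {y : Pt} (h : y ∈ convexHull ℝ (Set.range p)) :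
    ∃ w : Fin r → ℝ, (∀ k, 0 ≤ w k) ∧ ∑ k, w k = 1 ∧ ∑ k, w k • p k = y := by
  rw [convexHull_range_eq_exists_affineCombination] at h
  obtain ⟨s, w, hw0, hw1, hx⟩ := h
  refine ⟨fun k => if k ∈ s then w k else 0, fun k => ?_, ?_, ?_⟩
  · by_cases hk : k ∈ s <;> simp [hk, hw0 k]
  · rw [Finset.sum_ite_mem, Finset.univ_inter, hw1]
  · rw [← hx, Finset.affineCombination_eq_linear_combination s p w hw1]
    rw [show ∑ k, (if k ∈ s then w k else 0) • p k
        = ∑ k, (if k ∈ s then w k • p k else 0) from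
      Finset.sum_congr rfl (fun k _ => by by_cases hk : k ∈ s <;> simp [hk])]
    rw [Finset.sum_ite_mem, Finset.univ_inter]

lemma comb_mem_hull {r : ℕ} {p : Fin r → Pt} {w : Fin r → ℝ} (h0 : ∀ k, 0 ≤ w k)
    (h1 : ∑ k, w k = 1) : ∑ k, w k • p k ∈ convexHull ℝ (Set.range p) :=
  (convex_convexHull ℝ _).sum_mem (fun k _ => h0 k) h1
    (fun k _ => subset_convexHull ℝ _ ⟨k, rfl⟩)

lemma seg_comb {x y z : Pt} (h : z ∈ segment ℝ x y) :
    ∃ u v : ℝ, 0 ≤ u ∧ 0 ≤ v ∧ u + v = 1 ∧ z = ∑ k : Fin 2, (![u, v] k) • (![x, y] k) := by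
  obtain ⟨u, v, hu, hv, huv, hz⟩ := h
  exact ⟨u, v, hu, hv, huv, by simp [Fin.sum_univ_two, ← hz]⟩

lemma det3_left (a b : Pt) : det3 a b a = 0 := by simp only [det3]; ring
lemma det3_right (a b : Pt) : det3 a b b = 0 := by simp only [det3]; ring

lemma seg_det_eq_zero {a b z : Pt} (h : z ∈ segment ℝ a b) : det3 a b z = 0 := by
  obtain ⟨u, v, hu, hv, huv, hz⟩ := seg_comb h
  rw [hz, det3_comb a b _ _ (by simp [Fin.sum_univ_two, huv])]
  simp [Fin.sum_univ_two, det3_left, det3_right]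

section Poly

variable {n : ℕ} [NeZero n] {P : Fin n → Pt}

lemma d_nonneg_vertex (hP : CCW P) (j m : Fin n) : 0 ≤ det3 (P j) (P (j + 1)) (P m) := by
  by_cases h1 : m = j
  · subst h1; rw [det3_left]
  by_cases h2 : m = j + 1
  · subst h2; rw [det3_right]
  · exact le_of_lt (hP j m h1 h2)

lemma hullP_d_nonneg (hP : CCW P) (j : Fin n) {y : Pt} (hy : y ∈ hull P) :
    0 ≤ det3 (P j) (P (j + 1)) y := by
  obtain ⟨w, hw0, hw1, hwc⟩ := repr_hull hy
  rw [← hwc, det3_comb _ _ _ _ hw1]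
  exact Finset.sum_nonneg fun m _ => mul_nonneg (hw0 m) (d_nonneg_vertex hP j m)

lemma one_ne_zero_fin (hn : 3 ≤ n) : (1 : Fin n) ≠ 0 := by
  intro h
  open Fin.NatCast in rw [show (1 : Fin n) = ((1 : ℕ) : Fin n) by simp, Fin.natCast_eq_zero] at h
  have := Nat.le_of_dvd one_pos h
  omega

lemma two_ne_zero_fin (hn : 3 ≤ n) : (2 : Fin n) ≠ 0 := by
  intro h
  open Fin.NatCast in rw [show (2 : Fin n) = ((2 : ℕ) : Fin n) by simp, Fin.natCast_eq_zero] at h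
  have := Nat.le_of_dvd two_pos h
  omega

lemma on_edge_of_d_eq_zero (hn : 3 ≤ n) (hP : CCW P) (j : Fin n) {y : Pt}
    (hy : y ∈ hull P) (hd : det3 (P j) (P (j + 1)) y = 0) :
    y ∈ segment ℝ (P j) (P (j + 1)) := by
  have hjj : j ≠ j + 1 := by
    intro h
    exact one_ne_zero_fin hn (left_eq_add.mp h)
  obtain ⟨w, hw0, hw1, hwc⟩ := repr_hull hy
  rw [← hwc, det3_comb _ _ _ _ hw1] at hd
  have hall := (Finset.sum_eq_zero_iff_of_nonneg
    (fun m _ => mul_nonneg (hw0 m) (d_nonneg_vertex hP j m))).mp hd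
  have hzero : ∀ m : Fin n, m ≠ j → m ≠ j + 1 → w m = 0 := by
    intro m h1 h2
    have hpos := hP j m h1 h2
    have := hall m (Finset.mem_univ m)
    by_contra hw
    have hlt : 0 < w m * det3 (P j) (P (j + 1)) (P m) :=
      mul_pos (lt_of_le_of_ne (hw0 m) (Ne.symm hw)) hpos
    linarith
  have hsub : ({j, j + 1} : Finset (Fin n)) ⊆ Finset.univ := Finset.subset_univ _
  have hsum1 : w j + w (j + 1) = 1 := by
    rw [← hw1, ← Finset.sum_subset hsub (fun m _ hm => by
      simp only [Finset.mem_insert, Finset.mem_singleton, not_or] at hm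
      exact hzero m hm.1 hm.2)]
    rw [Finset.sum_pair hjj]
  have hsumy : w j • P j + w (j + 1) • P (j + 1) = y := by
    rw [← hwc, ← Finset.sum_subset hsub (fun m _ hm => by
      simp only [Finset.mem_insert, Finset.mem_singleton, not_or] at hm
      rw [hzero m hm.1 hm.2, zero_smul])]
    rw [Finset.sum_pair hjj]
  exact ⟨w j, w (j + 1), hw0 j, hw0 (j + 1), hsum1, hsumy⟩

lemma mem_edge_vertex (hn : 3 ≤ n) (hP : CCW P) {m a : Fin n}
    (h : P m ∈ segment ℝ (P a) (P (a + 1))) : m = a ∨ m = a + 1 := by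
  by_contra hc
  push_neg at hc
  have hpos := hP a m hc.1 hc.2
  have hz := seg_det_eq_zero h
  linarith

end Poly

lemma exists_emb {n : ℕ} (hn : 1 ≤ n) (k : Fin n) :
    ∃ e : Fin (n - 1) → Fin n, Set.range e = {m | m ≠ k} := by
  have hcast : n - 1 + 1 = n := Nat.succ_pred_eq_of_pos hn
  set q : Fin (n - 1 + 1) := finCongr hcast.symm k with hq
  refine ⟨fun a => finCongr hcast (q.succAbove a), ?_⟩
  ext m
  simp only [Set.mem_range, Set.mem_setOf_eq]
  constructor
  · rintro ⟨a, rfl⟩ h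
    exact q.succAbove_ne a (by
      have : q.succAbove a = finCongr hcast.symm k := by
        rw [← h]; simp
      rw [this, hq])
  · intro hm
    obtain ⟨a, ha⟩ := Fin.exists_succAbove_eq
      (show finCongr hcast.symm m ≠ q by
        rw [hq]; intro h; exact hm (by simpa using congrArg (finCongr hcast) h))
    exact ⟨a, by rw [ha]; simp⟩

lemma not_mem_hull_others {n : ℕ} (hn : 3 ≤ n) {P G : Fin n → Pt}
    (h1 : hull G ⊆ hull P) (h2 : ¬ DegenIn G P) (k : Fin n) :
    G k ∉ convexHull ℝ (G '' {m | m ≠ k}) := by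
  intro hmem
  apply h2
  obtain ⟨e, he⟩ := exists_emb (by omega) k
  refine ⟨n - 1, by omega, G ∘ e, ?_, ?_⟩
  · have hr : Set.range (G ∘ e) = G '' {m | m ≠ k} := by
      rw [Set.range_comp, he]
    apply convexHull_min _ (convex_convexHull ℝ _)
    rintro x ⟨m, rfl⟩
    show G m ∈ convexHull ℝ (Set.range (G ∘ e))
    rw [hr]
    by_cases hm : m = k
    · subst hm; exact hmem
    · exact subset_convexHull ℝ _ ⟨m, hm, rfl⟩
  · refine le_trans (convexHull_mono ?_) h1
    rw [Set.range_comp]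
    exact Set.image_subset_range G (Set.range e)

lemma isClosed_param_hull {r : ℕ} {s : Set ℝ} (hs : IsClosed s) {g : ℝ → Fin r → Pt}
    (hg : ContinuousOn g s) (y : Pt) :
    IsClosed {t | t ∈ s ∧ y ∈ convexHull ℝ (Set.range (g t))} := by
  apply IsSeqClosed.isClosed
  intro u p hu hup
  have hps : p ∈ s := hs.isSeqClosed (fun m => (hu m).1) hup
  refine ⟨hps, ?_⟩
  choose w hw0 hw1 hwc using fun m => repr_hull (hu m).2
  have hwS : ∀ m, w m ∈ stdSimplex ℝ (Fin r) := fun m => ⟨hw0 m, hw1 m⟩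
  obtain ⟨w', hw'S, φ, hφ, hφt⟩ := (isCompact_stdSimplex ℝ (Fin r)).tendsto_subseq hwS
  have hgt : Filter.Tendsto (fun m => g (u (φ m))) Filter.atTop (nhds (g p)) := by
    have h1 : Filter.Tendsto (fun m => u (φ m)) Filter.atTop (nhdsWithin p s) :=
      tendsto_nhdsWithin_of_tendsto_nhds_of_eventually_within _
        (hup.comp hφ.tendsto_atTop)
        (Filter.Eventually.of_forall fun m => (hu (φ m)).1)
    exact ((hg p hps).tendsto).comp h1
  have hlim : Filter.Tendsto (fun m => ∑ k, w (φ m) k • g (u (φ m)) k) Filter.atTop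
      (nhds (∑ k, w' k • g p k)) := by
    apply tendsto_finset_sum
    intro k _
    exact (((continuous_apply k).tendsto w').comp hφt).smul
      (((continuous_apply k).tendsto (g p)).comp hgt)
  have heq : (fun m => ∑ k, w (φ m) k • g (u (φ m)) k) = fun _ => y :=
    funext fun m => hwc (φ m)
  rw [heq] at hlim
  have : (∑ k, w' k • g p k) = y := (tendsto_nhds_unique tendsto_const_nhds hlim).symm
  rw [← this]
  exact comb_mem_hull (fun k => hw'S.1 k) hw'S.2

lemma main {n : ℕ} (hn : 3 ≤ n) [NeZero n] {P : Fin n → Pt} (hP : CCW P)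
    {c : ℝ} (hc : 0 ≤ c) {F : ℝ → Fin n → Pt}
    (hcont : ContinuousOn F (Set.Icc 0 c))
    (hdec : ∀ t t' : ℝ, t ∈ Set.Icc 0 c → t' ∈ Set.Icc 0 c → t ≤ t' →
      hull (F t') ⊆ hull (F t))
    (hnd : ∀ t ∈ Set.Icc (0 : ℝ) c, hull (F t) ⊆ hull P ∧ ¬ DegenIn (F t) P)
    (i j : Fin n) (hij : F c i ∈ segment ℝ (P j) (P (j + 1))) :
    ∀ t ∈ Set.Icc (0 : ℝ) c, F t i ∈ segment ℝ (P j) (P (j + 1)) := by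
  by_contra hA
  push_neg at hA
  obtain ⟨t0, ht0, ht0A⟩ := hA
  obtain ⟨e, he⟩ := exists_emb (by omega : 1 ≤ n) i
  set A := {t | t ∈ Set.Icc t0 c ∧ F t i ∈ segment ℝ (P j) (P (j + 1))} with hAdef
  have hsegcl : IsClosed (segment ℝ (P j) (P (j + 1))) := by
    rw [segment_eq_image ℝ]
    exact (isCompact_Icc.image (by continuity)).isClosed
  have hIccsub : Set.Icc t0 c ⊆ Set.Icc 0 c := Set.Icc_subset_Icc_left ht0.1
  have hconti : ContinuousOn (fun t => F t i) (Set.Icc t0 c) :=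
    ((continuous_apply i).comp_continuousOn (hcont.mono hIccsub))
  have hAclosed : IsClosed A := by
    have := hconti.preimage_isClosed_of_isClosed isClosed_Icc hsegcl
    convert this using 1
    rfl
  have hcA : c ∈ A := ⟨⟨ht0.2, le_refl c⟩, hij⟩
  have hAne : A.Nonempty := ⟨c, hcA⟩
  have hAbdd : BddBelow A := ⟨t0, fun x hx => hx.1.1⟩
  set ts := sInf A with hts
  have htsA : ts ∈ A := hAclosed.csInf_mem hAne hAbdd
  have ht0ts : t0 < ts := by
    rcases lt_or_eq_of_le (le_csInf hAne fun x hx => hx.1.1) with h | h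
    · exact h
    · rw [hts, ← h] at htsA; exact absurd htsA.2 ht0A
  have htsIcc : ts ∈ Set.Icc (0 : ℝ) c := ⟨le_trans ht0.1 (le_of_lt ht0ts), htsA.1.2⟩
  set y := F ts i with hy
  have hyseg : y ∈ segment ℝ (P j) (P (j + 1)) := htsA.2
  have hdy : det3 (P j) (P (j + 1)) y = 0 := seg_det_eq_zero hyseg
  -- the set S
  set S := {t | t ∈ Set.Icc t0 ts ∧
    y ∈ convexHull ℝ (Set.range (fun a => F t (e a)))} with hSdef
  have hScl : IsClosed S := by
    apply isClosed_param_hull isClosed_Icc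
    apply ContinuousOn.mono _ (Set.Icc_subset_Icc_right htsA.1.2)
    exact (continuous_pi fun a => continuous_apply (e a)).comp_continuousOn
      (hcont.mono hIccsub)
  have hIcoS : Set.Ico t0 ts ⊆ S := by
    intro t ht
    have htIcc : t ∈ Set.Icc (0 : ℝ) c :=
      ⟨le_trans ht0.1 ht.1, le_trans (le_of_lt ht.2) htsA.1.2⟩
    have htnA : F t i ∉ segment ℝ (P j) (P (j + 1)) := by
      intro hmem
      have : t ∈ A := ⟨⟨ht.1, le_trans (le_of_lt ht.2) htsA.1.2⟩, hmem⟩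
      exact absurd (csInf_le hAbdd this) (not_le.mpr ht.2)
    have hyh : y ∈ hull (F t) :=
      hdec t ts htIcc htsIcc (le_of_lt ht.2) (subset_convexHull ℝ _ ⟨i, rfl⟩)
    obtain ⟨w, hw0, hw1, hwc⟩ := repr_hull hyh
    have hdsum : ∑ k, w k * det3 (P j) (P (j + 1)) (F t k) = 0 := by
      rw [← det3_comb _ _ _ _ hw1, hwc, hdy]
    have hterm : ∀ k : Fin n, k ∈ Finset.univ →
        0 ≤ w k * det3 (P j) (P (j + 1)) (F t k) := by
      intro k _
      refine mul_nonneg (hw0 k) (hullP_d_nonneg hP j ?_)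
      exact (hnd t htIcc).1 (subset_convexHull ℝ _ ⟨k, rfl⟩)
    have hall0 := (Finset.sum_eq_zero_iff_of_nonneg hterm).mp hdsum
    have hwi : w i = 0 := by
      by_contra hwi
      have hpos : 0 < w i := lt_of_le_of_ne (hw0 i) (Ne.symm hwi)
      have hdi : det3 (P j) (P (j + 1)) (F t i) = 0 := by
        have := hall0 i (Finset.mem_univ i)
        rcases mul_eq_zero.mp this with h | h
        · exact absurd h hwi
        · exact h
      exact htnA (on_edge_of_d_eq_zero hn hP j
        ((hnd t htIcc).1 (subset_convexHull ℝ _ ⟨i, rfl⟩)) hdi)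
    refine ⟨⟨ht.1, le_of_lt ht.2⟩, ?_⟩
    have hyrep : y = ∑ k ∈ Finset.univ.erase i, w k • F t k := by
      rw [← hwc, Finset.sum_erase _ (by rw [hwi, zero_smul])]
    have hsum1 : ∑ k ∈ Finset.univ.erase i, w k = 1 := by
      rw [Finset.sum_erase _ hwi, hw1]
    rw [hyrep]
    refine (convex_convexHull ℝ _).sum_mem (fun k _ => hw0 k) hsum1 ?_
    intro k hk
    have hki : k ≠ i := (Finset.mem_erase.mp hk).1
    have : k ∈ Set.range e := by rw [he]; exact hki
    obtain ⟨a, rfl⟩ := this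
    exact subset_convexHull ℝ _ ⟨a, rfl⟩
  have htsS : ts ∈ S := by
    have h1 : ts ∈ closure (Set.Ico t0 ts) := by
      rw [closure_Ico (ne_of_lt ht0ts)]
      exact ⟨le_of_lt ht0ts, le_refl ts⟩
    have := closure_mono hIcoS h1
    rwa [hScl.closure_eq] at this
  have hrange : Set.range (fun a => F ts (e a)) = F ts '' {m | m ≠ i} := by
    rw [show (fun a => F ts (e a)) = F ts ∘ e from rfl, Set.range_comp, he]
  have hy2 : F ts i ∈ convexHull ℝ (F ts '' {m | m ≠ i}) := by
    rw [← hrange]; exact htsS.2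
  exact not_mem_hull_others hn (hnd ts htsIcc).1 (hnd ts htsIcc).2 i hy2

end S16



/-- If along a decreasing path of polygons non-degenerately contained
in the convex `n`-gon `P` the vertex `p_i(c)` ends up on `∂P`, then `p_i(t)` stays
on one of the two half-open edges of `P` adjacent to `p_i` for all `t`. -/
theorem statement16 (n : ℕ) (hn : 3 ≤ n) [NeZero n] (P : Fin n → Pt) (hP : CCW P)
    (c : ℝ) (hc : 0 ≤ c) (F : ℝ → Fin n → Pt)
    (hcont : ContinuousOn F (Set.Icc 0 c)) (h0 : F 0 = P)
    (hdec : ∀ t t' : ℝ, t ∈ Set.Icc 0 c → t' ∈ Set.Icc 0 c → t ≤ t' →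
      hull (F t') ⊆ hull (F t))
    (hnd : ∀ t ∈ Set.Icc (0 : ℝ) c, hull (F t) ⊆ hull P ∧ ¬ DegenIn (F t) P)
    (i : Fin n) (hi : F c i ∈ bdry P) :
    (∀ t ∈ Set.Icc (0 : ℝ) c,
        F t i ∈ segment ℝ (P (i - 1)) (P i) ∧ F t i ≠ P (i - 1)) ∨
    (∀ t ∈ Set.Icc (0 : ℝ) c,
        F t i ∈ segment ℝ (P i) (P (i + 1)) ∧ F t i ≠ P (i + 1)) := by
  obtain ⟨j, hj⟩ := Set.mem_iUnion.mp hi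
  have h1 := S16.one_ne_zero_fin (n := n) hn
  have h2 := S16.two_ne_zero_fin (n := n) hn
  have hall := S16.main hn hP hc hcont hdec hnd i j hj
  have h0i : P i ∈ segment ℝ (P j) (P (j + 1)) := by
    have := hall 0 ⟨le_refl 0, hc⟩
    rwa [h0] at this
  have key : ∀ t ∈ Set.Icc (0 : ℝ) c, ∀ j' : Fin n,
      F t i ∈ segment ℝ (P j') (P (j' + 1)) → P i ∈ segment ℝ (P j') (P (j' + 1)) := by
    intro t ht j' hmem
    have hall2 := S16.main hn hP ht.1 (hcont.mono (Set.Icc_subset_Icc_right ht.2))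
      (fun a b ha hb hab => hdec a b ⟨ha.1, ha.2.trans ht.2⟩ ⟨hb.1, hb.2.trans ht.2⟩ hab)
      (fun a ha => hnd a ⟨ha.1, ha.2.trans ht.2⟩) i j' hmem
    have := hall2 0 ⟨le_refl 0, ht.1⟩
    rwa [h0] at this
  rcases S16.mem_edge_vertex hn hP h0i with hcase | hcase
  · -- i = j : right branch
    refine Or.inr fun t ht => ⟨?_, ?_⟩
    · have := hall t ht
      rwa [← hcase] at this
    · intro heq
      have hmem : F t i ∈ segment ℝ (P (i + 1)) (P ((i + 1) + 1)) := by
        rw [heq]; exact left_mem_segment ℝ _ _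
      rcases S16.mem_edge_vertex hn hP (key t ht (i + 1) hmem) with h | h
      · have hz : i - (i + 1) = 0 := sub_eq_zero.mpr h
        rw [show i - (i + 1) = -1 from by open Fin.CommRing in ring] at hz
        exact h1 (neg_eq_zero.mp hz)
      · have hz : i - (i + 1 + 1) = 0 := sub_eq_zero.mpr h
        rw [show i - (i + 1 + 1) = -2 from by open Fin.CommRing in ring] at hz
        exact h2 (neg_eq_zero.mp hz)
  · -- i = j + 1 : left branch
    have hji : j = i - 1 := by rw [hcase]; open Fin.CommRing in ring
    refine Or.inl fun t ht => ⟨?_, ?_⟩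
    · have := hall t ht
      rw [hji, show (i - 1 + 1 : Fin n) = i from by open Fin.CommRing in ring] at this
      exact this
    · intro heq
      have hmem : F t i ∈ segment ℝ (P (i - 2)) (P ((i - 2) + 1)) := by
        rw [heq, show ((i - 2) + 1 : Fin n) = i - 1 from by open Fin.CommRing in ring]
        exact right_mem_segment ℝ _ _
      rcases S16.mem_edge_vertex hn hP (key t ht (i - 2) hmem) with h | h
      · have hz : i - (i - 2) = 0 := sub_eq_zero.mpr h
        rw [show i - (i - 2) = 2 from by open Fin.CommRing in ring] at hz
        exact h2 hz
      · have hz : i - (i - 2 + 1) = 0 := sub_eq_zero.mpr h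
        rw [show i - (i - 2 + 1) = 1 from by open Fin.CommRing in ring] at hz
        exact h1 hz

end
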